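/- arXiv:1801.04593 — 2 statements merged into one kernel-verified Lean document; each statement's English description precedes it below -/
import Mathlib

section
/- Let P₁, P₂ be probability mass functions with the same support on a finite alphabet X, and let X₁^n ~ iid P₁ and X₂^n ~ iid P₂ be independent. Then the probability that log(P₂/P₁)(X₁^n) + log(P₁/P₂)(X₂^n) ≥ 0 is at most e^{−2n·B(P₁,P₂)}, where log(P/Q)(x^n) = ∑_{t=1}^n log(P(x_t)/Q(x_t)) and B is the Bhattacharyya distance. -/
open scoped BigOperators

private lemma key {X : Type} [Fintype X] {n : ℕ} (Q R : X → ℝ)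
    (x : Fin n → X) (hQ : ∀ t, 0 < Q (x t)) (hR : ∀ t, 0 < R (x t)) :
    (∏ t, Q (x t)) * Real.exp (2⁻¹ * ∑ t, Real.log (R (x t) / Q (x t))) =
      ∏ t, Real.sqrt (Q (x t) * R (x t)) := by
  rw [Finset.mul_sum, Real.exp_sum, ← Finset.prod_mul_distrib]
  apply Finset.prod_congr rfl
  intro t _
  have hq := hQ t
  have hr := hR t
  have hdiv : 0 < R (x t) / Q (x t) := div_pos hr hq
  rw [show (2⁻¹ : ℝ) * Real.log (R (x t) / Q (x t)) =
        Real.log (R (x t) / Q (x t)) / 2 by ring,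
      ← Real.log_sqrt hdiv.le, Real.exp_log (Real.sqrt_pos.mpr hdiv),
      show Q (x t) * R (x t) = (Q (x t))^2 * (R (x t) / Q (x t)) by
        field_simp,
      Real.sqrt_mul (sq_nonneg _), Real.sqrt_sq hq.le]

/-- Chernoff-type bound for the pairwise identification error: if `X₁ⁿ ~ iid P₁` and
`X₂ⁿ ~ iid P₂` are independent, then the probability (written as a sum over all pairs
of sequences, weighted by the product distribution) that
`log(P₂/P₁)(X₁ⁿ) + log(P₁/P₂)(X₂ⁿ) ≥ 0` is at most `e^{-2n·B(P₁,P₂)}`, where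
`B(P₁,P₂) = -log ∑_x √(P₁(x)P₂(x))` is the Bhattacharyya distance. -/
theorem pairwise_error_le {X : Type} [Fintype X] (n : ℕ) (P₁ P₂ : X → ℝ)
    (h1 : ∀ x, 0 ≤ P₁ x) (h2 : ∀ x, 0 ≤ P₂ x)
    (hs1 : ∑ x, P₁ x = 1) (hs2 : ∑ x, P₂ x = 1)
    (hsupp : ∀ x, P₁ x = 0 ↔ P₂ x = 0) :
    (∑ x : Fin n → X, ∑ y : Fin n → X,
        if 0 ≤ (∑ t, Real.log (P₂ (x t) / P₁ (x t))) +
            (∑ t, Real.log (P₁ (y t) / P₂ (y t)))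
        then (∏ t, P₁ (x t)) * (∏ t, P₂ (y t)) else 0) ≤
      Real.exp (-2 * (n : ℝ) * (-Real.log (∑ x, Real.sqrt (P₁ x * P₂ x)))) := by
  set S := ∑ x, Real.sqrt (P₁ x * P₂ x) with hS
  -- S is positive
  have hx0 : ∃ x, 0 < P₁ x := by
    by_contra h
    push_neg at h
    have : ∑ x, P₁ x = 0 :=
      Finset.sum_eq_zero fun x _ => le_antisymm (h x) (h1 x)
    rw [this] at hs1; norm_num at hs1
  have hSpos : 0 < S := by
    obtain ⟨x, hx⟩ := hx0
    have hx2 : 0 < P₂ x := by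
      rcases (h2 x).lt_or_eq with h | h
      · exact h
      · exact absurd ((hsupp x).mpr h.symm) hx.ne'
    exact Finset.sum_pos' (fun y _ => Real.sqrt_nonneg _)
      ⟨x, Finset.mem_univ x, Real.sqrt_pos.mpr (mul_pos hx hx2)⟩
  -- rewrite RHS
  have hRHS : Real.exp (-2 * (n : ℝ) * (-Real.log S)) = S ^ (2 * n) := by
    have : -2 * (n : ℝ) * (-Real.log S) = Real.log (S ^ (2 * n)) := by
      rw [Real.log_pow]; push_cast; ring
    rw [this, Real.exp_log (pow_pos hSpos _)]
  rw [hRHS]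
  -- bound each term
  have hterm : ∀ x y : Fin n → X,
      (if 0 ≤ (∑ t, Real.log (P₂ (x t) / P₁ (x t))) +
          (∑ t, Real.log (P₁ (y t) / P₂ (y t)))
        then (∏ t, P₁ (x t)) * (∏ t, P₂ (y t)) else 0) ≤
      (∏ t, Real.sqrt (P₁ (x t) * P₂ (x t))) *
        (∏ t, Real.sqrt (P₁ (y t) * P₂ (y t))) := by
    intro x y
    have hnn : 0 ≤ (∏ t, Real.sqrt (P₁ (x t) * P₂ (x t))) *
        (∏ t, Real.sqrt (P₁ (y t) * P₂ (y t))) :=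
      mul_nonneg (Finset.prod_nonneg fun t _ => Real.sqrt_nonneg _)
        (Finset.prod_nonneg fun t _ => Real.sqrt_nonneg _)
    split_ifs with hcond
    · by_cases hzero : (∃ t, P₁ (x t) = 0) ∨ ∃ t, P₂ (y t) = 0
      · rcases hzero with ⟨t, ht⟩ | ⟨t, ht⟩
        · have h0 : ∏ t, P₁ (x t) = 0 := Finset.prod_eq_zero (Finset.mem_univ t) ht
          rw [h0, zero_mul]; exact hnn
        · have h0 : ∏ t, P₂ (y t) = 0 := Finset.prod_eq_zero (Finset.mem_univ t) ht
          rw [h0, mul_zero]; exact hnn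
      · push_neg at hzero
        obtain ⟨hz1, hz2⟩ := hzero
        have hp1 : ∀ t, 0 < P₁ (x t) := fun t => (h1 _).lt_of_ne' (hz1 t)
        have hp2x : ∀ t, 0 < P₂ (x t) := fun t => by
          rcases (h2 (x t)).lt_or_eq with h | h
          · exact h
          · exact absurd ((hsupp (x t)).mpr h.symm) (hz1 t)
        have hp2 : ∀ t, 0 < P₂ (y t) := fun t => (h2 _).lt_of_ne' (hz2 t)
        have hp1y : ∀ t, 0 < P₁ (y t) := fun t => by
          rcases (h1 (y t)).lt_or_eq with h | h
          · exact h
          · exact absurd ((hsupp (y t)).mp h.symm) (hz2 t)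
        have hexp : (1 : ℝ) ≤ Real.exp (2⁻¹ * ((∑ t, Real.log (P₂ (x t) / P₁ (x t))) +
            (∑ t, Real.log (P₁ (y t) / P₂ (y t))))) := by
          rw [← Real.exp_zero]
          exact Real.exp_le_exp.mpr (by positivity)
        have hw : 0 ≤ (∏ t, P₁ (x t)) * (∏ t, P₂ (y t)) :=
          mul_nonneg (Finset.prod_nonneg fun t _ => (hp1 t).le)
            (Finset.prod_nonneg fun t _ => (hp2 t).le)
        calc (∏ t, P₁ (x t)) * (∏ t, P₂ (y t))
            ≤ ((∏ t, P₁ (x t)) * (∏ t, P₂ (y t))) *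
              Real.exp (2⁻¹ * ((∑ t, Real.log (P₂ (x t) / P₁ (x t))) +
                (∑ t, Real.log (P₁ (y t) / P₂ (y t))))) := by
              nlinarith [hw, hexp]
          _ = ((∏ t, P₁ (x t)) * Real.exp (2⁻¹ * ∑ t, Real.log (P₂ (x t) / P₁ (x t)))) *
              ((∏ t, P₂ (y t)) * Real.exp (2⁻¹ * ∑ t, Real.log (P₁ (y t) / P₂ (y t)))) := by
              rw [mul_add, Real.exp_add]; ring
          _ = (∏ t, Real.sqrt (P₁ (x t) * P₂ (x t))) *
              (∏ t, Real.sqrt (P₁ (y t) * P₂ (y t))) := by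
              rw [key P₁ P₂ x hp1 hp2x, key P₂ P₁ y hp2 hp1y]
              congr 1
              exact Finset.prod_congr rfl fun t _ => by rw [mul_comm]
    · exact hnn
  calc (∑ x : Fin n → X, ∑ y : Fin n → X,
        if 0 ≤ (∑ t, Real.log (P₂ (x t) / P₁ (x t))) +
            (∑ t, Real.log (P₁ (y t) / P₂ (y t)))
        then (∏ t, P₁ (x t)) * (∏ t, P₂ (y t)) else 0)
      ≤ ∑ x : Fin n → X, ∑ y : Fin n → X,
          (∏ t, Real.sqrt (P₁ (x t) * P₂ (x t))) *
            (∏ t, Real.sqrt (P₁ (y t) * P₂ (y t))) :=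
        Finset.sum_le_sum fun x _ => Finset.sum_le_sum fun y _ => hterm x y
    _ = (∑ x : Fin n → X, ∏ t, Real.sqrt (P₁ (x t) * P₂ (x t))) *
        (∑ y : Fin n → X, ∏ t, Real.sqrt (P₁ (y t) * P₂ (y t))) := by
        rw [Finset.sum_mul_sum]
    _ = S ^ n * S ^ n := by
        have h := Finset.sum_pow' (Finset.univ : Finset X)
          (fun z => Real.sqrt (P₁ z * P₂ z)) n
        rw [Fintype.piFinset_univ] at h
        rw [← h]
    _ = S ^ (2 * n) := by rw [← pow_add, two_mul]
end

section
/- Let X₁^n, X₂^n, X₃^n be independent, with X_i^n ~ iid P_i for probability mass functions P₁,P₂,P₃ of common support on a finite alphabet. Then the probability of the joint event { log(P₁/P₂)(X₂^n)+log(P₂/P₁)(X₁^n) ≥ 0 } ∩ { log(P₁/P₃)(X₃^n)+log(P₃/P₁)(X₁^n) ≥ 0 } is at most exp(−n·B(P₁,P₂) − n·B(P₂,P₃) − n·B(P₁,P₃)). -/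
open Real Finset

lemma coordY {P Q : ℝ} (hP : 0 ≤ P) (hQ : 0 ≤ Q) (hsupp : P = 0 ↔ Q = 0) :
    Q * Real.exp (Real.log (P / Q) / 2) = Real.sqrt (P * Q) := by
  rcases eq_or_lt_of_le hQ with hQ0 | hQ0
  · rw [← hQ0, hsupp.mpr hQ0.symm]; simp
  · have hP0 : 0 < P := lt_of_le_of_ne hP (fun h => hQ0.ne' (hsupp.mp h.symm))
    have hr : 0 < P / Q := div_pos hP0 hQ0
    rw [← Real.log_sqrt hr.le, Real.exp_log (Real.sqrt_pos.mpr hr),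
      Real.sqrt_div hP, Real.sqrt_mul hP]
    field_simp
    nlinarith [Real.mul_self_sqrt hQ, Real.sqrt_nonneg P, Real.sqrt_nonneg Q]

lemma coordX {P Q R : ℝ} (hP : 0 ≤ P) (hQ : 0 ≤ Q) (hR : 0 ≤ R)
    (hsQ : P = 0 ↔ Q = 0) (hsR : P = 0 ↔ R = 0) :
    P * (Real.exp (Real.log (Q / P) / 2) * Real.exp (Real.log (R / P) / 2)) =
      Real.sqrt (Q * R) := by
  rcases eq_or_lt_of_le hP with hP0 | hP0
  · rw [← hP0, hsQ.mp hP0.symm]; simp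
  · have hQ0 : 0 < Q := lt_of_le_of_ne hQ (fun h => hP0.ne' (hsQ.mpr h.symm))
    have hR0 : 0 < R := lt_of_le_of_ne hR (fun h => hP0.ne' (hsR.mpr h.symm))
    rw [← Real.log_sqrt (div_pos hQ0 hP0).le, Real.exp_log (Real.sqrt_pos.mpr (div_pos hQ0 hP0)),
        ← Real.log_sqrt (div_pos hR0 hP0).le, Real.exp_log (Real.sqrt_pos.mpr (div_pos hR0 hP0)),
        Real.sqrt_div hQ, Real.sqrt_div hR, Real.sqrt_mul hQ]
    field_simp
    rw [Real.sq_sqrt hP]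

lemma sum_prod_pow {X : Type} [Fintype X] (n : ℕ) (g : X → ℝ) :
    ∑ x : Fin n → X, ∏ t, g (x t) = (∑ u, g u) ^ n := by
  rw [show (∑ u, g u) ^ n = ∏ _t : Fin n, ∑ u, g u by
    rw [Finset.prod_const, Finset.card_univ, Fintype.card_fin]]
  rw [Finset.prod_univ_sum, ← Fintype.piFinset_univ]

/-- Bound on the probability of two overlapping pairwise error events: with
`X₁ⁿ ~ iid P₁`, `X₂ⁿ ~ iid P₂`, `X₃ⁿ ~ iid P₃` independent, the probability (a sum
over triples of sequences weighted by the product distribution) of the joint event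
`{log(P₁/P₂)(X₂ⁿ) + log(P₂/P₁)(X₁ⁿ) ≥ 0} ∩ {log(P₁/P₃)(X₃ⁿ) + log(P₃/P₁)(X₁ⁿ) ≥ 0}`
is at most `exp(-n·B(P₁,P₂) - n·B(P₂,P₃) - n·B(P₁,P₃))`, where `B` is the
Bhattacharyya distance `B(P,Q) = -log ∑_x √(P(x)Q(x))`. -/
theorem joint_pairwise_error_le {X : Type} [Fintype X] (n : ℕ) (P₁ P₂ P₃ : X → ℝ)
    (h1 : ∀ x, 0 ≤ P₁ x) (h2 : ∀ x, 0 ≤ P₂ x) (h3 : ∀ x, 0 ≤ P₃ x)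
    (hs1 : ∑ x, P₁ x = 1) (hs2 : ∑ x, P₂ x = 1) (hs3 : ∑ x, P₃ x = 1)
    (hsupp12 : ∀ x, P₁ x = 0 ↔ P₂ x = 0) (hsupp13 : ∀ x, P₁ x = 0 ↔ P₃ x = 0) :
    (∑ x : Fin n → X, ∑ y : Fin n → X, ∑ z : Fin n → X,
        if 0 ≤ (∑ t, Real.log (P₁ (y t) / P₂ (y t))) +
              (∑ t, Real.log (P₂ (x t) / P₁ (x t))) ∧
           0 ≤ (∑ t, Real.log (P₁ (z t) / P₃ (z t))) +
              (∑ t, Real.log (P₃ (x t) / P₁ (x t)))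
        then (∏ t, P₁ (x t)) * (∏ t, P₂ (y t)) * (∏ t, P₃ (z t)) else 0) ≤
      Real.exp (-(n : ℝ) * (-Real.log (∑ x, Real.sqrt (P₁ x * P₂ x)))
        - (n : ℝ) * (-Real.log (∑ x, Real.sqrt (P₂ x * P₃ x)))
        - (n : ℝ) * (-Real.log (∑ x, Real.sqrt (P₁ x * P₃ x)))) := by
  have hsupp23 : ∀ x, P₂ x = 0 ↔ P₃ x = 0 := fun x =>
    ⟨fun h => (hsupp13 x).mp ((hsupp12 x).mpr h), fun h => (hsupp12 x).mp ((hsupp13 x).mpr h)⟩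
  set F : (Fin n → X) → ℝ := fun x => ∏ t, Real.sqrt (P₂ (x t) * P₃ (x t)) with hF
  set G : (Fin n → X) → ℝ := fun y => ∏ t, Real.sqrt (P₁ (y t) * P₂ (y t)) with hG
  set H : (Fin n → X) → ℝ := fun z => ∏ t, Real.sqrt (P₁ (z t) * P₃ (z t)) with hH
  have key : ∀ x y z : Fin n → X,
      (∏ t, P₁ (x t)) * (∏ t, P₂ (y t)) * (∏ t, P₃ (z t)) *
        Real.exp (((∑ t, Real.log (P₁ (y t) / P₂ (y t))) +
          (∑ t, Real.log (P₂ (x t) / P₁ (x t)))) / 2) *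
        Real.exp (((∑ t, Real.log (P₁ (z t) / P₃ (z t))) +
          (∑ t, Real.log (P₃ (x t) / P₁ (x t)))) / 2) = F x * G y * H z := by
    intro x y z
    rw [add_div, add_div, Real.exp_add, Real.exp_add, Finset.sum_div, Finset.sum_div,
      Finset.sum_div, Finset.sum_div, Real.exp_sum, Real.exp_sum, Real.exp_sum, Real.exp_sum]
    calc (∏ t, P₁ (x t)) * (∏ t, P₂ (y t)) * (∏ t, P₃ (z t)) *
          ((∏ t, Real.exp (Real.log (P₁ (y t) / P₂ (y t)) / 2)) *
            ∏ t, Real.exp (Real.log (P₂ (x t) / P₁ (x t)) / 2)) *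
          ((∏ t, Real.exp (Real.log (P₁ (z t) / P₃ (z t)) / 2)) *
            ∏ t, Real.exp (Real.log (P₃ (x t) / P₁ (x t)) / 2))
        = (∏ t, P₁ (x t) * (Real.exp (Real.log (P₂ (x t) / P₁ (x t)) / 2) *
              Real.exp (Real.log (P₃ (x t) / P₁ (x t)) / 2))) *
          (∏ t, P₂ (y t) * Real.exp (Real.log (P₁ (y t) / P₂ (y t)) / 2)) *
          (∏ t, P₃ (z t) * Real.exp (Real.log (P₁ (z t) / P₃ (z t)) / 2)) := by
          simp only [Finset.prod_mul_distrib]; ring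
      _ = F x * G y * H z := by
          rw [hF, hG, hH,
            Finset.prod_congr rfl (fun t (_ : t ∈ Finset.univ) =>
              coordX (h1 (x t)) (h2 (x t)) (h3 (x t)) (hsupp12 (x t)) (hsupp13 (x t))),
            Finset.prod_congr rfl (fun t (_ : t ∈ Finset.univ) =>
              coordY (h1 (y t)) (h2 (y t)) (hsupp12 (y t))),
            Finset.prod_congr rfl (fun t (_ : t ∈ Finset.univ) =>
              coordY (h1 (z t)) (h3 (z t)) (hsupp13 (z t)))]
  have step1 : (∑ x : Fin n → X, ∑ y : Fin n → X, ∑ z : Fin n → X,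
        if 0 ≤ (∑ t, Real.log (P₁ (y t) / P₂ (y t))) +
              (∑ t, Real.log (P₂ (x t) / P₁ (x t))) ∧
           0 ≤ (∑ t, Real.log (P₁ (z t) / P₃ (z t))) +
              (∑ t, Real.log (P₃ (x t) / P₁ (x t)))
        then (∏ t, P₁ (x t)) * (∏ t, P₂ (y t)) * (∏ t, P₃ (z t)) else 0) ≤
      ∑ x : Fin n → X, ∑ y : Fin n → X, ∑ z : Fin n → X, F x * G y * H z := by
    refine Finset.sum_le_sum fun x _ => Finset.sum_le_sum fun y _ => Finset.sum_le_sum fun z _ => ?_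
    split_ifs with h
    · rw [← key x y z]
      have hW : 0 ≤ (∏ t, P₁ (x t)) * (∏ t, P₂ (y t)) * (∏ t, P₃ (z t)) :=
        mul_nonneg (mul_nonneg (Finset.prod_nonneg fun t _ => h1 _)
          (Finset.prod_nonneg fun t _ => h2 _)) (Finset.prod_nonneg fun t _ => h3 _)
      have e1 : (1 : ℝ) ≤ Real.exp (((∑ t, Real.log (P₁ (y t) / P₂ (y t))) +
          (∑ t, Real.log (P₂ (x t) / P₁ (x t)))) / 2) := Real.one_le_exp (by linarith [h.1])
      have e2 : (1 : ℝ) ≤ Real.exp (((∑ t, Real.log (P₁ (z t) / P₃ (z t))) +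
          (∑ t, Real.log (P₃ (x t) / P₁ (x t)))) / 2) := Real.one_le_exp (by linarith [h.2])
      nlinarith [mul_le_mul_of_nonneg_left e1 hW]
    · have : 0 ≤ F x * G y * H z := by
        apply mul_nonneg (mul_nonneg ?_ ?_) ?_ <;>
          exact Finset.prod_nonneg fun t _ => Real.sqrt_nonneg _
      exact this
  refine step1.trans ?_
  have factor : (∑ x : Fin n → X, ∑ y : Fin n → X, ∑ z : Fin n → X, F x * G y * H z)
      = (∑ x, F x) * (∑ y, G y) * (∑ z, H z) := by
    simp only [← Finset.mul_sum, ← Finset.sum_mul, mul_assoc]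
  rw [factor, hF, hG, hH]
  simp only
  rw [sum_prod_pow n (fun u => Real.sqrt (P₂ u * P₃ u)),
      sum_prod_pow n (fun u => Real.sqrt (P₁ u * P₂ u)),
      sum_prod_pow n (fun u => Real.sqrt (P₁ u * P₃ u))]
  -- positivity of sums
  obtain ⟨u, _, hu⟩ := Finset.exists_ne_zero_of_sum_ne_zero (by rw [hs1]; norm_num :
    ∑ x : X, P₁ x ≠ 0)
  have hu1 : 0 < P₁ u := lt_of_le_of_ne (h1 u) (Ne.symm hu)
  have hu2 : 0 < P₂ u := lt_of_le_of_ne (h2 u)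
    (fun h => hu ((hsupp12 u).mpr h.symm))
  have hu3 : 0 < P₃ u := lt_of_le_of_ne (h3 u)
    (fun h => hu ((hsupp13 u).mpr h.symm))
  have hS12 : 0 < ∑ x, Real.sqrt (P₁ x * P₂ x) :=
    Finset.sum_pos' (fun i _ => Real.sqrt_nonneg _)
      ⟨u, Finset.mem_univ u, Real.sqrt_pos.mpr (mul_pos hu1 hu2)⟩
  have hS23 : 0 < ∑ x, Real.sqrt (P₂ x * P₃ x) :=
    Finset.sum_pos' (fun i _ => Real.sqrt_nonneg _)
      ⟨u, Finset.mem_univ u, Real.sqrt_pos.mpr (mul_pos hu2 hu3)⟩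
  have hS13 : 0 < ∑ x, Real.sqrt (P₁ x * P₃ x) :=
    Finset.sum_pos' (fun i _ => Real.sqrt_nonneg _)
      ⟨u, Finset.mem_univ u, Real.sqrt_pos.mpr (mul_pos hu1 hu3)⟩
  have : Real.exp (-(n : ℝ) * (-Real.log (∑ x, Real.sqrt (P₁ x * P₂ x)))
        - (n : ℝ) * (-Real.log (∑ x, Real.sqrt (P₂ x * P₃ x)))
        - (n : ℝ) * (-Real.log (∑ x, Real.sqrt (P₁ x * P₃ x))))
      = (∑ x, Real.sqrt (P₁ x * P₂ x)) ^ n * (∑ x, Real.sqrt (P₂ x * P₃ x)) ^ n *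
        (∑ x, Real.sqrt (P₁ x * P₃ x)) ^ n := by
    rw [show -(n : ℝ) * (-Real.log (∑ x, Real.sqrt (P₁ x * P₂ x)))
        - (n : ℝ) * (-Real.log (∑ x, Real.sqrt (P₂ x * P₃ x)))
        - (n : ℝ) * (-Real.log (∑ x, Real.sqrt (P₁ x * P₃ x)))
      = (n : ℝ) * Real.log (∑ x, Real.sqrt (P₁ x * P₂ x))
        + (n : ℝ) * Real.log (∑ x, Real.sqrt (P₂ x * P₃ x))
        + (n : ℝ) * Real.log (∑ x, Real.sqrt (P₁ x * P₃ x)) by ring,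
      Real.exp_add, Real.exp_add, Real.exp_nat_mul, Real.exp_nat_mul, Real.exp_nat_mul,
      Real.exp_log hS12, Real.exp_log hS23, Real.exp_log hS13]
  rw [this]
  ring_nf
  exact le_refl _
end
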